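/- If X, Y, Z are independent Exp(1) random variables, δ ∈ ℝ, and d ≥ 0, then P(Y ≥ X + Z − δ and Z ≤ d) = (1/4)e^{δ}(1 − e^{−2d}) if δ ≤ 0, (1/4)(4 − e^{−δ}(3 + e^{−2(d−δ)} + 2δ)) if 0 < δ ≤ d, and (1/4)(4 − 4e^{−d} − 2d e^{−δ}) if δ > d. -/

import Mathlib

open Real MeasureTheory ProbabilityTheory
section prob_aux
open Set

noncomputable def nu : Measure ℝ := expMeasure 1

lemma nu_eq : nu = MeasureTheory.volume.withDensity (exponentialPDF 1) := rfl

instance : IsProbabilityMeasure nu := isProbabilityMeasure_expMeasure one_pos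

lemma nu_Ici (t : ℝ) : nu (Ici t) = ENNReal.ofReal (exp (-(max t 0))) := by
  have hIic : nu (Iic t) = ENNReal.ofReal (if 0 ≤ t then 1 - exp (-t) else 0) := by
    rw [nu_eq, withDensity_apply _ measurableSet_Iic,
      lintegral_exponentialPDF_eq_antiDeriv one_pos]
    simp
  have hsingle : nu {t} = 0 := by
    rw [nu_eq, withDensity_apply _ (measurableSet_singleton t)]
    simp [Measure.restrict_singleton]
  have hIio : nu (Iio t) = ENNReal.ofReal (if 0 ≤ t then 1 - exp (-t) else 0) := by
    have : nu (Iic t) = nu (Iio t) + nu {t} := by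
      rw [← measure_union (by simp) (measurableSet_singleton t), Iio_union_right]
    rw [hsingle, add_zero] at this
    rw [← this, hIic]
  have h1 : nu (Ici t) = 1 - nu (Iio t) := by
    rw [← measure_univ (μ := nu), ← compl_Iio, measure_compl measurableSet_Iio (measure_ne_top _ _)]
  rw [h1, hIio]
  split_ifs with h
  · rw [max_eq_left h, ← ENNReal.ofReal_one, ← ENNReal.ofReal_sub _ (sub_nonneg.2 (exp_le_one_iff.2 (by linarith)))]
    congr 1; ring
  · rw [max_eq_right (le_of_not_ge h)]
    simp

lemma expneg_integrable : IntegrableOn (fun x => exp (-x)) (Ioi (0:ℝ)) := by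
  simpa using exp_neg_integrableOn_Ioi 0 one_pos

lemma nu_lintegral (g : ℝ → ℝ) (hg : Measurable g) (h0 : ∀ x, 0 ≤ g x) (h1 : ∀ x, g x ≤ 1) :
    ∫⁻ x, ENNReal.ofReal (g x) ∂nu = ENNReal.ofReal (∫ x in Ioi 0, exp (-x) * g x) := by
  have hpdf : Measurable (exponentialPDF 1) := (measurable_exponentialPDFReal 1).ennreal_ofReal
  rw [nu_eq, lintegral_withDensity_eq_lintegral_mul _ hpdf (hg.ennreal_ofReal)]
  have hae : (fun x => (exponentialPDF 1 * fun x => ENNReal.ofReal (g x)) x)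
      =ᵐ[MeasureTheory.volume]
      (Ioi (0:ℝ)).indicator (fun x => ENNReal.ofReal (exp (-x) * g x)) := by
    have h0m : (MeasureTheory.volume : Measure ℝ) {0} = 0 := measure_singleton 0
    filter_upwards [measure_eq_zero_iff_ae_notMem.mp h0m] with x hx
    simp only [Pi.mul_apply, exponentialPDF_eq, one_mul]
    rcases lt_trichotomy x 0 with h | h | h
    · rw [if_neg (by linarith), indicator_of_notMem (by simpa using not_lt.2 h.le)]
      simp
    · exact absurd h (by simpa using hx)
    · rw [if_pos h.le, indicator_of_mem (by simpa using h),
        ENNReal.ofReal_mul (exp_pos _).le]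
  rw [lintegral_congr_ae hae, lintegral_indicator measurableSet_Ioi _]
  rw [← ofReal_integral_eq_lintegral_ofReal]
  · exact Integrable.mono expneg_integrable
      ((measurable_exp.comp measurable_neg).mul hg).aestronglyMeasurable
      (ae_of_all _ fun x => by
        simp only [norm_mul, Real.norm_eq_abs, abs_of_nonneg (exp_pos _).le, abs_of_nonneg (h0 x)]
        nlinarith [exp_pos (-x), h0 x, h1 x])
  · exact ae_of_all _ fun x => mul_nonneg (exp_pos _).le (h0 x)

lemma int_exp_lin (a b c e : ℝ) (hc : c ≠ 0) :
    ∫ x in a..b, exp (c*x + e) = (exp (c*b+e) - exp (c*a+e))/c := by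
  rw [intervalIntegral.integral_comp_mul_add Real.exp hc e, integral_exp, smul_eq_mul]
  field_simp

lemma int_exp2_Ioi (a : ℝ) : ∫ x in Ioi a, exp (-(2*x)) = exp (-(2*a))/2 := by
  rw [integral_comp_mul_left_Ioi (fun x => exp (-x)) a two_pos, integral_exp_neg_Ioi,
    smul_eq_mul]
  ring

noncomputable def gre (t : ℝ) : ℝ := if 0 ≤ t then exp (-t)/2 else 1 - exp t / 2

lemma gre_nonneg (t : ℝ) : 0 ≤ gre t := by
  unfold gre; split_ifs with h
  · positivity
  · nlinarith [exp_le_one_iff.2 (le_of_not_ge h), exp_pos t]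

lemma gre_le_one (t : ℝ) : gre t ≤ 1 := by
  unfold gre; split_ifs with h
  · nlinarith [exp_le_one_iff.2 (neg_nonpos.2 h)]
  · nlinarith [exp_pos t]

lemma gre_measurable : Measurable gre := by
  unfold gre
  exact Measurable.ite (measurableSet_le measurable_const measurable_id)
    (by fun_prop) (by fun_prop)

lemma inner_int (t : ℝ) :
    ∫⁻ x, ENNReal.ofReal (exp (-(max (x + t) 0))) ∂nu = ENNReal.ofReal (gre t) := by
  rw [nu_lintegral _ (by fun_prop) (fun x => (exp_pos _).le)
      (fun x => exp_le_one_iff.2 (neg_nonpos.2 (le_max_right _ _)))]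
  congr 1
  rcases le_or_gt 0 t with ht | ht
  · rw [setIntegral_congr_fun measurableSet_Ioi
      (g := fun x => exp (-t) * exp (-(2*x)))
      (fun x hx => by
        simp only []
        rw [max_eq_left (by simp at hx; linarith), ← Real.exp_add, ← Real.exp_add]
        congr 1; ring)]
    rw [integral_const_mul, int_exp2_Ioi, gre, if_pos ht]
    rw [mul_zero, neg_zero, Real.exp_zero]
    ring
  · have hts : (0:ℝ) < -t := by linarith
    have hu : Ioc (0:ℝ) (-t) ∪ Ioi (-t) = Ioi 0 := Ioc_union_Ioi_eq_Ioi hts.le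
    have hcont : Continuous (fun x : ℝ => exp (-x) * exp (-(max (x + t) 0))) := by fun_prop
    have hint2 : IntegrableOn (fun x : ℝ => exp (-x) * exp (-(max (x + t) 0))) (Ioi (-t)) := by
      refine Integrable.mono (expneg_integrable.mono_set (Ioi_subset_Ioi hts.le))
        hcont.aestronglyMeasurable (ae_of_all _ fun x => ?_)
      simp only [norm_mul, Real.norm_eq_abs, abs_of_nonneg (exp_pos _).le]
      nlinarith [exp_pos (-x), exp_le_one_iff.2 (neg_nonpos.2 (le_max_right (x+t) 0)),
        exp_pos (-(max (x+t) 0))]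
    rw [← hu, setIntegral_union (Ioc_disjoint_Ioi le_rfl) measurableSet_Ioi
      (hcont.integrableOn_Ioc) hint2]
    have e1 : ∫ x in Ioc (0:ℝ) (-t), exp (-x) * exp (-(max (x + t) 0)) = 1 - exp t := by
      rw [setIntegral_congr_fun measurableSet_Ioc (g := fun x => exp ((-1)*x + 0))
        (fun x hx => by
          simp only []
          rw [max_eq_right (by simp at hx; linarith)]
          simp)]
      rw [← intervalIntegral.integral_of_le hts.le, int_exp_lin _ _ _ _ (by norm_num)]
      simp
      ring
    have e2 : ∫ x in Ioi (-t), exp (-x) * exp (-(max (x + t) 0)) = exp t / 2 := by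
      rw [setIntegral_congr_fun measurableSet_Ioi (g := fun x => exp (-t) * exp (-(2*x)))
        (fun x hx => by
          simp only []
          rw [max_eq_left (by simp at hx; linarith), ← Real.exp_add, ← Real.exp_add]
          congr 1; ring)]
      rw [integral_const_mul, int_exp2_Ioi,
        show rexp (-t) * (rexp (-(2 * -t)) / 2) = (rexp (-t) * rexp (-(2 * -t)))/2 by ring,
        ← Real.exp_add, show -t + -(2 * -t) = t by ring]
    rw [e1, e2, gre, if_neg (not_le.2 ht)]
    ring

lemma prod_formula (δ d : ℝ) :
    ((nu.prod nu).prod nu) {p : (ℝ×ℝ)×ℝ | p.1.1 + p.1.2 - δ ≤ p.2 ∧ p.1.2 ≤ d}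
      = ENNReal.ofReal (∫ z in Ioi 0, exp (-z) * (if z ≤ d then gre (z - δ) else 0)) := by
  have hS : MeasurableSet {p : (ℝ×ℝ)×ℝ | p.1.1 + p.1.2 - δ ≤ p.2 ∧ p.1.2 ≤ d} := by
    have : Measurable (fun p : (ℝ×ℝ)×ℝ => p.1.1 + p.1.2 - δ) := by fun_prop
    exact (measurableSet_le this measurable_snd).inter
      (measurableSet_le (measurable_snd.comp measurable_fst) measurable_const)
  rw [Measure.prod_apply hS]
  have h1 : ∀ w : ℝ × ℝ, nu (Prod.mk w ⁻¹' {p : (ℝ×ℝ)×ℝ | p.1.1 + p.1.2 - δ ≤ p.2 ∧ p.1.2 ≤ d})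
      = if w.2 ≤ d then ENNReal.ofReal (exp (-(max (w.1 + w.2 - δ) 0))) else 0 := by
    intro w
    split_ifs with h
    · have he : Prod.mk w ⁻¹' {p : (ℝ×ℝ)×ℝ | p.1.1 + p.1.2 - δ ≤ p.2 ∧ p.1.2 ≤ d}
          = Ici (w.1 + w.2 - δ) := by
        ext y; simp [h]
      rw [he, nu_Ici]
    · have he : Prod.mk w ⁻¹' {p : (ℝ×ℝ)×ℝ | p.1.1 + p.1.2 - δ ≤ p.2 ∧ p.1.2 ≤ d}
          = (∅ : Set ℝ) := by
        ext y; simp [h]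
      rw [he, measure_empty]
  rw [lintegral_congr h1]
  have hf : Measurable (fun w : ℝ × ℝ =>
      if w.2 ≤ d then ENNReal.ofReal (exp (-(max (w.1 + w.2 - δ) 0))) else 0) := by
    refine Measurable.ite (measurableSet_le measurable_snd measurable_const) ?_ measurable_const
    fun_prop
  rw [MeasureTheory.lintegral_prod_symm _ hf.aemeasurable]
  have h2 : ∀ z : ℝ, (∫⁻ x, (if z ≤ d then
        ENNReal.ofReal (exp (-(max (x + z - δ) 0))) else 0) ∂nu)
      = ENNReal.ofReal (if z ≤ d then gre (z - δ) else 0) := by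
    intro z
    split_ifs with h
    · simp only [add_sub_assoc]
      exact inner_int (z - δ)
    · simp
  rw [lintegral_congr fun z => h2 z]
  exact nu_lintegral _ (Measurable.ite (measurableSet_le measurable_id measurable_const)
      (gre_measurable.comp (by fun_prop)) measurable_const)
    (fun z => by split_ifs; exacts [gre_nonneg _, le_rfl])
    (fun z => by split_ifs; exacts [gre_le_one _, zero_le_one])

lemma gre_of_nonpos {t : ℝ} (ht : t ≤ 0) : gre t = 1 - exp t / 2 := by
  unfold gre; split_ifs with h
  · have h0 : t = 0 := le_antisymm ht h
    subst h0; norm_num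
  · rfl

lemma gre_of_nonneg {t : ℝ} (ht : 0 ≤ t) : gre t = exp (-t)/2 := if_pos ht

lemma int_piece1 (a b δ : ℝ) (hab : a ≤ b) (hbδ : b ≤ δ) :
    ∫ z in Ioc a b, exp (-z) * gre (z - δ)
      = (exp (-a) - exp (-b)) - (b - a) * (exp (-δ)/2) := by
  rw [setIntegral_congr_fun measurableSet_Ioc (g := fun z => exp ((-1)*z + 0) - exp (-δ)/2)
    (fun z hz => by
      simp only []
      rw [gre_of_nonpos (by simp at hz; linarith), mul_sub, mul_one, ← mul_div_assoc,
        ← Real.exp_add, show -z + (z - δ) = -δ by ring, show (-1)*z + 0 = -z by ring])]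
  rw [← intervalIntegral.integral_of_le hab,
    intervalIntegral.integral_sub ((by fun_prop : Continuous fun z : ℝ => exp ((-1)*z+0)).intervalIntegrable _ _)
      (intervalIntegrable_const),
    int_exp_lin _ _ _ _ (by norm_num), intervalIntegral.integral_const, smul_eq_mul,
    show (-1)*b + 0 = -b by ring, show (-1)*a + 0 = -a by ring]
  ring

lemma int_piece2 (a b δ : ℝ) (hab : a ≤ b) (hδa : δ ≤ a) :
    ∫ z in Ioc a b, exp (-z) * gre (z - δ)
      = (exp (δ - 2*a) - exp (δ - 2*b))/4 := by
  rw [setIntegral_congr_fun measurableSet_Ioc (g := fun z => exp ((-2)*z + δ)/2)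
    (fun z hz => by
      simp only []
      rw [gre_of_nonneg (by simp at hz; linarith), ← mul_div_assoc, ← Real.exp_add,
        show -z + -(z - δ) = (-2)*z + δ by ring])]
  rw [← intervalIntegral.integral_of_le hab, intervalIntegral.integral_div,
    int_exp_lin _ _ _ _ (by norm_num),
    show (-2)*b + δ = δ - 2*b by ring, show (-2)*a + δ = δ - 2*a by ring]
  ring

lemma real_int_Ioc (δ d : ℝ) (hd : 0 ≤ d) :
    ∫ z in Ioi 0, exp (-z) * (if z ≤ d then gre (z - δ) else 0)
      = ∫ z in Ioc 0 d, exp (-z) * gre (z - δ) := by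
  have hu : Ioc (0:ℝ) d ∪ Ioi d = Ioi 0 := Ioc_union_Ioi_eq_Ioi hd
  have hm : Measurable fun z : ℝ => exp (-z) * (if z ≤ d then gre (z - δ) else 0) := by
    exact (measurable_exp.comp measurable_neg).mul
      (Measurable.ite (measurableSet_le measurable_id measurable_const)
        (gre_measurable.comp (by fun_prop)) measurable_const)
  have hint1 : IntegrableOn (fun z : ℝ => exp (-z) * (if z ≤ d then gre (z - δ) else 0))
      (Ioc 0 d) := by
    refine Measure.integrableOn_of_bounded (measure_Ioc_lt_top).ne hm.aestronglyMeasurable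
      (M := 1) ?_
    filter_upwards [ae_restrict_mem measurableSet_Ioc] with z hz
    simp only [norm_mul, Real.norm_eq_abs, abs_of_nonneg (exp_pos (-z)).le]
    have h1 : |if z ≤ d then gre (z - δ) else 0| ≤ 1 := by
      split_ifs
      · rw [abs_of_nonneg (gre_nonneg _)]; exact gre_le_one _
      · simp
    have h2 : rexp (-z) ≤ 1 := exp_le_one_iff.2 (by simp at hz; linarith)
    nlinarith [abs_nonneg (if z ≤ d then gre (z - δ) else 0), exp_pos (-z)]
  have hzero : EqOn (fun z : ℝ => exp (-z) * (if z ≤ d then gre (z - δ) else 0))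
      (fun _ => (0:ℝ)) (Ioi d) := fun z hz => by
    simp only [if_neg (not_le.2 (mem_Ioi.1 hz)), mul_zero]
  have hint2 : IntegrableOn (fun z : ℝ => exp (-z) * (if z ≤ d then gre (z - δ) else 0))
      (Ioi d) := by
    rw [integrableOn_congr_fun hzero measurableSet_Ioi]
    exact integrableOn_zero
  rw [← hu, setIntegral_union (Ioc_disjoint_Ioi le_rfl) measurableSet_Ioi hint1 hint2,
    setIntegral_congr_fun measurableSet_Ioi hzero, integral_zero, add_zero,
    setIntegral_congr_fun measurableSet_Ioc (g := fun z => exp (-z) * gre (z - δ))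
      (fun z hz => by simp only [if_pos (mem_Ioc.1 hz).2])]

lemma f_integrableOn (δ a b : ℝ) :
    IntegrableOn (fun z : ℝ => exp (-z) * gre (z - δ)) (Ioc a b) := by
  refine Measure.integrableOn_of_bounded (measure_Ioc_lt_top).ne
    (((measurable_exp.comp measurable_neg).mul (gre_measurable.comp (by fun_prop))).aestronglyMeasurable)
    (M := exp (-a)) ?_
  filter_upwards [ae_restrict_mem measurableSet_Ioc] with z hz
  simp only [norm_mul, Real.norm_eq_abs, abs_of_nonneg (exp_pos (-z)).le,
    abs_of_nonneg (gre_nonneg _)]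
  have h2 : rexp (-z) ≤ rexp (-a) := exp_le_exp.2 (by simp at hz; linarith)
  nlinarith [gre_le_one (z - δ), gre_nonneg (z - δ), exp_pos (-z)]

lemma case1 (δ d : ℝ) (hδ : δ ≤ 0) (hd : 0 ≤ d) :
    ∫ z in Ioc 0 d, exp (-z) * gre (z - δ) = (1/4) * exp δ * (1 - exp (-(2*d))) := by
  rw [int_piece2 0 d δ hd hδ, show δ - 2*0 = δ by ring,
    show δ - 2*d = δ + -(2*d) by ring, Real.exp_add]
  ring

lemma case2 (δ d : ℝ) (hδ : 0 < δ) (hδd : δ ≤ d) :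
    ∫ z in Ioc 0 d, exp (-z) * gre (z - δ)
      = (1/4) * (4 - exp (-δ) * (3 + exp (-(2*(d-δ))) + 2*δ)) := by
  rw [← Ioc_union_Ioc_eq_Ioc hδ.le hδd,
    setIntegral_union (Ioc_disjoint_Ioc_of_le le_rfl) measurableSet_Ioc
      (f_integrableOn δ 0 δ) (f_integrableOn δ δ d),
    int_piece1 0 δ δ hδ.le le_rfl, int_piece2 δ d δ hδd le_rfl,
    show δ - 2*δ = -δ by ring, show δ - 2*d = -δ + -(2*(d-δ)) by ring, Real.exp_add]
  simp only [neg_zero, Real.exp_zero, sub_zero]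
  ring

lemma case3 (δ d : ℝ) (hdδ : d < δ) (hd : 0 ≤ d) :
    ∫ z in Ioc 0 d, exp (-z) * gre (z - δ)
      = (1/4) * (4 - 4 * exp (-d) - 2 * d * exp (-δ)) := by
  rw [int_piece1 0 d δ hd hdδ.le]
  simp only [neg_zero, Real.exp_zero, sub_zero]
  ring

end prob_aux

/-- For independent `Exp(1)` variables `X, Y, Z`, `δ ∈ ℝ` and `d ≥ 0`, the probability
`P(Y ≥ X + Z − δ, Z ≤ d)` is given by the stated piecewise formula. -/
theorem prob_event_two {Ω : Type*} [MeasurableSpace Ω] (μ : Measure Ω)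
    [IsProbabilityMeasure μ] (X Y Z : Ω → ℝ)
    (hX : Measurable X) (hY : Measurable Y) (hZ : Measurable Z)
    (hindep : iIndepFun ![X, Y, Z] μ)
    (hXe : Measure.map X μ = expMeasure 1)
    (hYe : Measure.map Y μ = expMeasure 1)
    (hZe : Measure.map Z μ = expMeasure 1)
    (δ d : ℝ) (hd : 0 ≤ d) :
    (δ ≤ 0 → μ {ω | X ω + Z ω - δ ≤ Y ω ∧ Z ω ≤ d} =
        ENNReal.ofReal ((1 / 4) * exp δ * (1 - exp (-(2 * d))))) ∧
    (0 < δ → δ ≤ d → μ {ω | X ω + Z ω - δ ≤ Y ω ∧ Z ω ≤ d} =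
        ENNReal.ofReal ((1 / 4) * (4 - exp (-δ) * (3 + exp (-(2 * (d - δ))) + 2 * δ)))) ∧
    (d < δ → μ {ω | X ω + Z ω - δ ≤ Y ω ∧ Z ω ≤ d} =
        ENNReal.ofReal ((1 / 4) * (4 - 4 * exp (-d) - 2 * d * exp (-δ)))) := by
  have hmeas : ∀ i, Measurable (![X, Y, Z] i) := by
    intro i; fin_cases i <;> simpa
  have hW : IndepFun (fun ω => (X ω, Z ω)) Y μ := by
    have := hindep.indepFun_prodMk hmeas 0 2 1 (by decide) (by decide)
    simpa using this
  have hXZ : IndepFun X Z μ := by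
    have := hindep.indepFun (show (0 : Fin 3) ≠ 2 by decide)
    simpa using this
  have mapXZ : μ.map (fun ω => (X ω, Z ω)) = nu.prod nu := by
    rw [(indepFun_iff_map_prod_eq_prod_map_map hX.aemeasurable hZ.aemeasurable).1 hXZ,
      hXe, hZe]; rfl
  have mapW : μ.map (fun ω => ((X ω, Z ω), Y ω)) = (nu.prod nu).prod nu := by
    rw [(indepFun_iff_map_prod_eq_prod_map_map ((hX.prodMk hZ)).aemeasurable
      hY.aemeasurable).1 hW, mapXZ, hYe]; rfl
  have hS : MeasurableSet {p : (ℝ×ℝ)×ℝ | p.1.1 + p.1.2 - δ ≤ p.2 ∧ p.1.2 ≤ d} := by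
    have : Measurable (fun p : (ℝ×ℝ)×ℝ => p.1.1 + p.1.2 - δ) := by fun_prop
    exact (measurableSet_le this measurable_snd).inter
      (measurableSet_le (measurable_snd.comp measurable_fst) measurable_const)
  have key : μ {ω | X ω + Z ω - δ ≤ Y ω ∧ Z ω ≤ d}
      = ((nu.prod nu).prod nu) {p : (ℝ×ℝ)×ℝ | p.1.1 + p.1.2 - δ ≤ p.2 ∧ p.1.2 ≤ d} := by
    rw [← mapW, Measure.map_apply (by fun_prop) hS]
    rfl
  rw [key, prod_formula δ d, real_int_Ioc δ d hd]
  refine ⟨fun h1 => ?_, fun h2a h2b => ?_, fun h3 => ?_⟩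
  · rw [case1 δ d h1 hd]
  · rw [case2 δ d h2a h2b]
  · rw [case3 δ d h3 hd]
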